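/- arXiv:math/0505346 — 3 statements merged into one kernel-verified Lean document; each statement's English description precedes it below -/
import Mathlib

section
/- The space $\mathcal{F}^\alpha$ of continuous real functions $\sigma$ on $[-\pi,\pi]$, $C^1$ away from $0$, with finite norm $\|\sigma\|_{\mathcal{F}^\alpha} = \|\sigma\|_{C^0} + \|\theta\sigma'\|_{C^\alpha}$, is continuously embedded into the Hölder space $C^\alpha([-\pi,\pi])$: there is a constant $C$ such that $\|\sigma\|_{C^\alpha} \le C\|\sigma\|_{\mathcal{F}^\alpha}$ for all $\sigma \in \mathcal{F}^\alpha$. -/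
lemma mono_aux (f f' : ℝ → ℝ) (a b : ℝ)
    (hc : ContinuousOn f (Set.Icc a b))
    (hd : ∀ x ∈ Set.Ioo a b, HasDerivAt f (f' x) x)
    (hpos : ∀ x ∈ Set.Ioo a b, 0 ≤ f' x) (hab : a ≤ b) : f a ≤ f b := by
  have hm : MonotoneOn f (Set.Icc a b) := by
    apply monotoneOn_of_deriv_nonneg (convex_Icc a b) hc
    · rw [interior_Icc]
      exact fun x hx => (hd x hx).differentiableAt.differentiableWithinAt
    · rw [interior_Icc]
      intro x hx
      rw [(hd x hx).deriv]
      exact hpos x hx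
  exact hm (Set.left_mem_Icc.2 hab) (Set.right_mem_Icc.2 hab) hab

/-- core estimate with logarithmic correction, on `[a,b]` with `a > 0`. -/
lemma core1 (α C c a b : ℝ) (hα : 0 < α) (ha : 0 < a) (hab : a ≤ b)
    (σ σ' : ℝ → ℝ) (hσc : ContinuousOn σ (Set.Icc a b))
    (hσd : ∀ θ ∈ Set.Ioo a b, HasDerivAt σ (σ' θ) θ)
    (hb : ∀ θ ∈ Set.Ioo a b, |θ * σ' θ - c| ≤ C * θ ^ α) :
    |σ b - σ a - c * (Real.log b - Real.log a)| ≤ C / α * (b ^ α - a ^ α) := by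
  have hrpow_cont : ContinuousOn (fun θ : ℝ => C / α * θ ^ α) (Set.Icc a b) :=
    (continuous_const.mul (Real.continuous_rpow_const hα.le)).continuousOn
  have hlog_cont : ContinuousOn (fun θ : ℝ => c * Real.log θ) (Set.Icc a b) := by
    apply continuousOn_const.mul
    apply Real.continuousOn_log.mono
    intro θ hθ
    exact (lt_of_lt_of_le ha hθ.1).ne'
  -- derivative facts at interior points
  have hF : ∀ θ ∈ Set.Ioo a b,
      HasDerivAt (fun θ : ℝ => C / α * θ ^ α + c * Real.log θ)
        (C * θ ^ α / θ + c / θ) θ := by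
    intro θ hθ
    have hθ0 : 0 < θ := lt_trans ha hθ.1
    have h1 : HasDerivAt (fun θ : ℝ => C / α * θ ^ α) (C / α * (α * θ ^ (α - 1))) θ :=
      (Real.hasDerivAt_rpow_const (Or.inl hθ0.ne')).const_mul _
    have h2 : HasDerivAt (fun θ : ℝ => c * Real.log θ) (c * θ⁻¹) θ :=
      (Real.hasDerivAt_log hθ0.ne').const_mul c
    have h3 := h1.add h2
    refine h3.congr_deriv ?_
    rw [Real.rpow_sub hθ0, Real.rpow_one]
    field_simp
  have key1 : ∀ θ ∈ Set.Ioo a b, σ' θ ≤ C * θ ^ α / θ + c / θ := by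
    intro θ hθ
    have hθ0 : 0 < θ := lt_trans ha hθ.1
    have h := (abs_le.1 (hb θ hθ)).2
    rw [← add_div, le_div_iff₀ hθ0, mul_comm]
    linarith
  have key2 : ∀ θ ∈ Set.Ioo a b, c / θ - C * θ ^ α / θ ≤ σ' θ := by
    intro θ hθ
    have hθ0 : 0 < θ := lt_trans ha hθ.1
    have h := (abs_le.1 (hb θ hθ)).1
    rw [← sub_div, div_le_iff₀ hθ0]
    linarith [mul_comm θ (σ' θ)]
  have m1 : (fun θ => C / α * θ ^ α + c * Real.log θ - σ θ) a ≤
      (fun θ => C / α * θ ^ α + c * Real.log θ - σ θ) b := by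
    apply mono_aux _ (fun θ => C * θ ^ α / θ + c / θ - σ' θ) a b
      ((hrpow_cont.add hlog_cont).sub hσc)
      (fun θ hθ => (hF θ hθ).sub (hσd θ hθ))
      (fun θ hθ => by linarith [key1 θ hθ]) hab
  have m2 : (fun θ => C / α * θ ^ α + (σ θ - c * Real.log θ)) a ≤
      (fun θ => C / α * θ ^ α + (σ θ - c * Real.log θ)) b := by
    apply mono_aux _ (fun θ => C / α * (α * θ ^ (α - 1)) + (σ' θ - c / θ)) a b
      (hrpow_cont.add (hσc.sub hlog_cont))
    · intro θ hθ
      have hθ0 : 0 < θ := lt_trans ha hθ.1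
      have h2' : HasDerivAt (fun θ : ℝ => c * Real.log θ) (c / θ) θ := by
        simpa [div_eq_mul_inv] using (Real.hasDerivAt_log hθ0.ne').const_mul c
      exact ((Real.hasDerivAt_rpow_const (Or.inl hθ0.ne')).const_mul _).add
        ((hσd θ hθ).sub h2')
    · intro θ hθ
      have hθ0 : 0 < θ := lt_trans ha hθ.1
      have e : C / α * (α * θ ^ (α - 1)) = C * θ ^ α / θ := by
        rw [Real.rpow_sub hθ0, Real.rpow_one]
        field_simp
      rw [e]
      linarith [key2 θ hθ]
    · exact hab
  simp only at m1 m2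
  rw [abs_le]
  constructor <;> [linarith; linarith]

/-- core estimate on `[a,b] ⊆ [0,∞)` when `θσ'` is bounded by `Cθ^α`. -/
lemma core0 (α C a b : ℝ) (hα : 0 < α) (ha : 0 ≤ a) (hab : a ≤ b)
    (σ σ' : ℝ → ℝ) (hσc : ContinuousOn σ (Set.Icc a b))
    (hσd : ∀ θ ∈ Set.Ioo a b, HasDerivAt σ (σ' θ) θ)
    (hb : ∀ θ ∈ Set.Ioo a b, |θ * σ' θ| ≤ C * θ ^ α) :
    |σ b - σ a| ≤ C / α * (b ^ α - a ^ α) := by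
  have hrpow_cont : ContinuousOn (fun θ : ℝ => C / α * θ ^ α) (Set.Icc a b) :=
    (continuous_const.mul (Real.continuous_rpow_const hα.le)).continuousOn
  have key : ∀ θ ∈ Set.Ioo a b, |σ' θ| ≤ C * θ ^ α / θ := by
    intro θ hθ
    have hθ0 : 0 < θ := lt_of_le_of_lt ha hθ.1
    rw [abs_le]
    have h := abs_le.1 (hb θ hθ)
    constructor
    · rw [neg_le, le_div_iff₀ hθ0]
      have := mul_comm θ (σ' θ)
      nlinarith [h.1]
    · rw [le_div_iff₀ hθ0]
      linarith [mul_comm θ (σ' θ), h.2]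
  have hd' : ∀ θ ∈ Set.Ioo a b,
      HasDerivAt (fun θ : ℝ => C / α * θ ^ α) (C * θ ^ α / θ) θ := by
    intro θ hθ
    have hθ0 : 0 < θ := lt_of_le_of_lt ha hθ.1
    have h1 := (Real.hasDerivAt_rpow_const (p := α) (Or.inl hθ0.ne')).const_mul (C / α)
    refine h1.congr_deriv ?_
    rw [Real.rpow_sub hθ0, Real.rpow_one]
    field_simp
  have m1 : (fun θ => C / α * θ ^ α - σ θ) a ≤ (fun θ => C / α * θ ^ α - σ θ) b := by
    apply mono_aux _ (fun θ => C * θ ^ α / θ - σ' θ) a b (hrpow_cont.sub hσc)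
      (fun θ hθ => (hd' θ hθ).sub (hσd θ hθ))
      (fun θ hθ => by linarith [(abs_le.1 (key θ hθ)).2]) hab
  have m2 : (fun θ => C / α * θ ^ α + σ θ) a ≤ (fun θ => C / α * θ ^ α + σ θ) b := by
    apply mono_aux _ (fun θ => C * θ ^ α / θ + σ' θ) a b (hrpow_cont.add hσc)
      (fun θ hθ => (hd' θ hθ).add (hσd θ hθ))
      (fun θ hθ => by linarith [(abs_le.1 (key θ hθ)).1]) hab
  simp only at m1 m2
  rw [abs_le]
  constructor <;> linarith

/-- subadditivity of rpow for exponent ≤ 1 -/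
lemma rpow_subadd {α : ℝ} (hα0 : 0 ≤ α) (hα1 : α ≤ 1) {x y : ℝ} (hx : 0 ≤ x) (hy : 0 ≤ y) :
    (x + y) ^ α ≤ x ^ α + y ^ α := by
  have h := NNReal.coe_le_coe.2 (NNReal.rpow_add_le_add_rpow x.toNNReal y.toNNReal hα0 hα1)
  rwa [NNReal.coe_add, NNReal.coe_rpow, NNReal.coe_rpow, NNReal.coe_rpow, NNReal.coe_add,
    Real.coe_toNNReal _ hx, Real.coe_toNNReal _ hy] at h

/-- Membership in the space `𝓕^α` on `[-π,π]` with "norm" bounded by `C`: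
`σ` is continuous, `C¹` away from `0`, `g` is a continuous extension of `θ ↦ θσ'(θ)`,
and `|σ| ≤ C`, `|g| ≤ C`, with `g` `α`-Hölder with constant `C`. -/
def MemF (α C : ℝ) (σ σ' g : ℝ → ℝ) : Prop :=
  ContinuousOn σ (Set.Icc (-Real.pi) Real.pi) ∧
  (∀ θ ∈ Set.Icc (-Real.pi) Real.pi, θ ≠ 0 →
    HasDerivWithinAt σ (σ' θ) (Set.Icc (-Real.pi) Real.pi) θ) ∧
  ContinuousOn g (Set.Icc (-Real.pi) Real.pi) ∧
  (∀ θ ∈ Set.Icc (-Real.pi) Real.pi, θ ≠ 0 → g θ = θ * σ' θ) ∧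
  (∀ θ ∈ Set.Icc (-Real.pi) Real.pi, |σ θ| ≤ C) ∧
  (∀ θ ∈ Set.Icc (-Real.pi) Real.pi, |g θ| ≤ C) ∧
  (∀ x ∈ Set.Icc (-Real.pi) Real.pi, ∀ y ∈ Set.Icc (-Real.pi) Real.pi,
    |g x - g y| ≤ C * |x - y| ^ α)

/-- the space `𝓕^α` embeds continuously into the Hölder space `C^α([-π,π])`:
`‖σ‖_{C^α} ≤ K ‖σ‖_{𝓕^α}` with `K` independent of `σ`. -/
theorem stmt7 (α : ℝ) (hα0 : 0 < α) (hα1 : α < 1) :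
    ∃ K : ℝ, ∀ C : ℝ, ∀ σ σ' g : ℝ → ℝ, MemF α C σ σ' g →
      (∀ x ∈ Set.Icc (-Real.pi) Real.pi, |σ x| ≤ K * C) ∧
      (∀ x ∈ Set.Icc (-Real.pi) Real.pi, ∀ y ∈ Set.Icc (-Real.pi) Real.pi,
        |σ x - σ y| ≤ K * C * |x - y| ^ α) := by
  refine ⟨1 + 2 / α, ?_⟩
  intro C σ σ' g hM
  obtain ⟨hσc, hσd, hgc, hgσ, hσb, hgb, hgh⟩ := hM
  have hπ := Real.pi_pos
  have h0mem : (0:ℝ) ∈ Set.Icc (-Real.pi) Real.pi := ⟨by linarith, hπ.le⟩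
  have hC : 0 ≤ C := le_trans (abs_nonneg _) (hσb 0 h0mem)
  have hCα : 0 ≤ C / α := div_nonneg hC hα0.le
  have hDA : ∀ θ, -Real.pi < θ → θ < Real.pi → θ ≠ 0 → HasDerivAt σ (σ' θ) θ := by
    intro θ h1 h2 h3
    exact (hσd θ ⟨h1.le, h2.le⟩ h3).hasDerivAt (Icc_mem_nhds h1 h2)
  have hg0 : ∀ θ ∈ Set.Icc (-Real.pi) Real.pi, |g θ - g 0| ≤ C * |θ| ^ α := by
    intro θ hθ
    simpa using hgh θ hθ 0 h0mem
  -- Step 1: g 0 = 0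
  have hgzero : g 0 = 0 := by
    by_contra hne
    have habs : 0 < |g 0| := abs_pos.2 hne
    obtain ⟨n, hn⟩ := exists_nat_gt ((2*C + C/α * Real.pi ^ α) / |g 0|)
    set a := Real.pi * Real.exp (-(n:ℝ)) with ha_def
    have ha : 0 < a := mul_pos hπ (Real.exp_pos _)
    have hexp1 : Real.exp (-(n:ℝ)) ≤ 1 := by
      rw [Real.exp_le_one_iff]
      simp
    have haπ : a ≤ Real.pi := by nlinarith
    have hsubset : Set.Icc a Real.pi ⊆ Set.Icc (-Real.pi) Real.pi :=
      fun t ht => ⟨by linarith [ht.1], ht.2⟩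
    have hcore := core1 α C (g 0) a Real.pi hα0 ha haπ σ σ' (hσc.mono hsubset)
      (fun θ hθ => hDA θ (by linarith [hθ.1]) hθ.2 (by linarith [hθ.1] : (0:ℝ) < θ).ne')
      (by
        intro θ hθ
        have hθ0 : 0 < θ := lt_trans ha hθ.1
        have hm : θ ∈ Set.Icc (-Real.pi) Real.pi := ⟨by linarith, hθ.2.le⟩
        rw [← hgσ θ hm hθ0.ne']
        have := hg0 θ hm
        rwa [abs_of_pos hθ0] at this)
    have e : Real.log Real.pi - Real.log a = n := by
      rw [ha_def, Real.log_mul hπ.ne' (Real.exp_ne_zero _), Real.log_exp]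
      ring
    rw [e] at hcore
    have hσπ := hσb Real.pi ⟨by linarith, le_refl _⟩
    have hσa := hσb a ⟨by linarith, haπ⟩
    have haα : 0 ≤ a ^ α := Real.rpow_nonneg ha.le α
    have h2 : C/α * (Real.pi ^ α - a ^ α) ≤ C/α * Real.pi ^ α :=
      mul_le_mul_of_nonneg_left (by linarith) hCα
    have t1 : |σ Real.pi - σ a| ≤ 2 * C := by
      have := abs_sub (σ Real.pi) (σ a)
      linarith
    have t3 : |g 0 * (n:ℝ)| ≤ |σ Real.pi - σ a - g 0 * n| + |σ Real.pi - σ a| := by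
      have h := abs_sub (σ Real.pi - σ a) (σ Real.pi - σ a - g 0 * (n:ℝ))
      have he : (σ Real.pi - σ a) - (σ Real.pi - σ a - g 0 * (n:ℝ)) = g 0 * n := by ring
      rw [he] at h
      linarith
    have t4 : |g 0| * n ≤ 2*C + C/α * Real.pi ^ α := by
      have h1 : |g 0 * (n:ℝ)| = |g 0| * n := by rw [abs_mul, Nat.abs_cast]
      linarith [t3, hcore, t1, h2, h1.symm.le, h1.le]
    have : 2*C + C/α * Real.pi ^ α < |g 0| * n := by
      rw [div_lt_iff₀ habs] at hn
      linarith
    linarith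
  -- Step 2: positive-side bound
  have P : ∀ x y : ℝ, 0 ≤ x → x ≤ y → y ≤ Real.pi →
      |σ y - σ x| ≤ C/α * (y ^ α - x ^ α) := by
    intro x y hx hxy hyπ
    apply core0 α C x y hα0 hx hxy σ σ'
      (hσc.mono (fun t ht => ⟨by linarith [ht.1], by linarith [ht.2]⟩))
    · intro θ hθ
      have hθ0 : 0 < θ := lt_of_le_of_lt hx hθ.1
      exact hDA θ (by linarith) (by linarith [hθ.2]) hθ0.ne'
    · intro θ hθ
      have hθ0 : 0 < θ := lt_of_le_of_lt hx hθ.1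
      have hm : θ ∈ Set.Icc (-Real.pi) Real.pi := ⟨by linarith, by linarith [hθ.2]⟩
      rw [← hgσ θ hm hθ0.ne']
      have := hg0 θ hm
      rwa [hgzero, sub_zero, abs_of_pos hθ0] at this
  -- Step 3: negative-side bound
  have N : ∀ x y : ℝ, -Real.pi ≤ x → x ≤ y → y ≤ 0 →
      |σ x - σ y| ≤ C/α * ((-x) ^ α - (-y) ^ α) := by
    intro x y hx hxy hy0
    have hres := core0 α C (-y) (-x) hα0 (by linarith) (by linarith)
      (fun t => σ (-t)) (fun t => σ' (-t) * (-1))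
      (by
        apply hσc.comp continuousOn_neg
        intro t ht
        exact ⟨by linarith [ht.2], by linarith [ht.1]⟩)
      (by
        intro θ hθ
        have hθ0 : 0 < θ := lt_of_le_of_lt (by linarith) hθ.1
        have h1 : HasDerivAt σ (σ' (-θ)) (-θ) :=
          hDA (-θ) (by linarith [hθ.2]) (by linarith) (by linarith : -θ < 0).ne
        exact h1.comp θ (hasDerivAt_neg θ))
      (by
        intro θ hθ
        have hθ0 : 0 < θ := lt_of_le_of_lt (by linarith) hθ.1
        have hm : -θ ∈ Set.Icc (-Real.pi) Real.pi := ⟨by linarith [hθ.2], by linarith⟩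
        have he : θ * (σ' (-θ) * (-1)) = (-θ) * σ' (-θ) := by ring
        rw [he, ← hgσ (-θ) hm (by linarith : -θ < 0).ne]
        have := hg0 (-θ) hm
        rwa [hgzero, sub_zero, abs_neg, abs_of_pos hθ0] at this)
    simpa using hres
  -- subadditivity
  have SA : ∀ u v : ℝ, 0 ≤ u → u ≤ v → v ^ α - u ^ α ≤ (v - u) ^ α := by
    intro u v hu huv
    have h := rpow_subadd hα0.le hα1.le (sub_nonneg.2 huv) hu
    rw [sub_add_cancel] at h
    linarith
  -- combined Hölder bound
  have hK : ∀ x ∈ Set.Icc (-Real.pi) Real.pi, ∀ y ∈ Set.Icc (-Real.pi) Real.pi,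
      x ≤ y → |σ y - σ x| ≤ 2 * (C/α) * (y - x) ^ α := by
    intro x hx y hy hxy
    have hyx : 0 ≤ y - x := sub_nonneg.2 hxy
    have hrpn : 0 ≤ (y - x) ^ α := Real.rpow_nonneg hyx α
    rcases le_or_gt 0 x with hx0 | hx0
    · have h1 := P x y hx0 hxy hy.2
      have h2 := SA x y hx0 hxy
      nlinarith [mul_le_mul_of_nonneg_left h2 hCα]
    rcases le_or_gt y 0 with hy0 | hy0
    · have h1 := N x y hx.1 hxy hy0
      have h2 := SA (-y) (-x) (by linarith) (by linarith)
      rw [abs_sub_comm] at h1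
      have h3 : (-x) - (-y) = y - x := by ring
      rw [h3] at h2
      nlinarith [mul_le_mul_of_nonneg_left h2 hCα]
    · have hp := P 0 y le_rfl hy0.le hy.2
      have hn := N x 0 hx.1 hx0.le le_rfl
      rw [Real.zero_rpow hα0.ne'] at hp
      rw [neg_zero, Real.zero_rpow hα0.ne'] at hn
      have m1 : y ^ α ≤ (y - x) ^ α := Real.rpow_le_rpow hy0.le (by linarith) hα0.le
      have m2 : (-x) ^ α ≤ (y - x) ^ α := Real.rpow_le_rpow (by linarith) (by linarith) hα0.le
      have tri : |σ y - σ x| ≤ |σ y - σ 0| + |σ 0 - σ x| := abs_sub_le _ _ _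
      rw [abs_sub_comm (σ 0) (σ x)] at tri
      nlinarith [mul_le_mul_of_nonneg_left m1 hCα, mul_le_mul_of_nonneg_left m2 hCα]
  constructor
  · intro x hx
    have h1 := hσb x hx
    have h2 : 0 ≤ 2/α * C := mul_nonneg (by positivity) hC
    nlinarith
  · intro x hx y hy
    have coef : 2 * (C/α) ≤ (1 + 2/α) * C := by
      have he : (1 + 2/α) * C - 2 * (C/α) = C := by
        field_simp
        ring
      linarith
    rcases le_total x y with h | h
    · have h1 := hK x hx y hy h
      rw [abs_sub_comm (σ x) (σ y), abs_sub_comm x y, abs_of_nonneg (sub_nonneg.2 h)]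
      have hrpn : 0 ≤ (y - x) ^ α := Real.rpow_nonneg (sub_nonneg.2 h) α
      nlinarith [mul_le_mul_of_nonneg_right coef hrpn]
    · have h1 := hK y hy x hx h
      rw [abs_of_nonneg (sub_nonneg.2 h)]
      have hrpn : 0 ≤ (x - y) ^ α := Real.rpow_nonneg (sub_nonneg.2 h) α
      nlinarith [mul_le_mul_of_nonneg_right coef hrpn]
end

section
/- Let $p$ divide $k$, both even positive integers with $2 \le p \le k-2$, let $0 < a \le 1/\cos(p\pi/(2k))$, and set $b = (p/k)\tan(p\pi/(2k))$. Then the trigonometric polynomial $g_1(\theta) = 1 - a\cos(p\theta) + b\cos(k\theta)$ satisfies $g_1(\theta) \ge 0$ for all $\theta \in \mathbb{R}$. -/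
open Real Set

/-- Key concavity lemma: for real `m ≥ 2` and `u ∈ [0, π/2]`,
`sin (u/m) ≤ sin (π/(2m)) * sin u`. -/
lemma keyB {m : ℝ} (hm : 2 ≤ m) {u : ℝ} (hu0 : 0 ≤ u) (hu1 : u ≤ π / 2) :
    Real.sin (u / m) ≤ Real.sin (π / (2 * m)) * Real.sin u := by
  have hm0 : (0:ℝ) < m := by linarith
  have hπ : (0:ℝ) < π := Real.pi_pos
  set c : ℝ := π / (2 * m) with hc
  set g : ℝ → ℝ := fun u => Real.sin c * Real.sin u - Real.sin (u / m) with hg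
  -- first derivative
  have hg' : ∀ x : ℝ, HasDerivAt g (Real.sin c * Real.cos x - Real.cos (x / m) * (1 / m)) x := by
    intro x
    have h1 : HasDerivAt (fun y : ℝ => Real.sin (y / m)) (Real.cos (x / m) * (1 / m)) x := by
      have := (Real.hasDerivAt_sin (x / m)).comp x ((hasDerivAt_id x).div_const m)
      simpa [one_div, Function.comp_def] using this
    exact ((Real.hasDerivAt_sin x).const_mul (Real.sin c)).sub h1
  set g' : ℝ → ℝ := fun x => Real.sin c * Real.cos x - Real.cos (x / m) * (1 / m) with hgp
  -- second derivative
  have hg'' : ∀ x : ℝ, HasDerivAt g'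
      (Real.sin (x / m) * (1 / m) * (1 / m) - Real.sin c * Real.sin x) x := by
    intro x
    have h1 : HasDerivAt (fun y : ℝ => Real.cos (y / m)) (-Real.sin (x / m) * (1 / m)) x := by
      have := (Real.hasDerivAt_cos (x / m)).comp x ((hasDerivAt_id x).div_const m)
      simpa [one_div, Function.comp_def] using this
    have h2 := ((Real.hasDerivAt_cos x).const_mul (Real.sin c)).sub (h1.mul_const (1 / m))
    refine h2.congr_deriv ?_
    ring
  have hcr0 : 0 ≤ c := by positivity
  have hcr1 : c ≤ π / 2 := by
    rw [hc, div_le_div_iff₀ (by linarith) (by norm_num)]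
    nlinarith
  have hsc : 1 / m ≤ Real.sin c := by
    have h := Real.mul_le_sin hcr0 hcr1
    calc 1 / m = 2 / π * c := by rw [hc]; field_simp
    _ ≤ Real.sin c := h
  -- second derivative nonpositive on the interior
  have hnonpos : ∀ x ∈ interior (Icc (0:ℝ) (π/2)),
      Real.sin (x / m) * (1 / m) * (1 / m) - Real.sin c * Real.sin x ≤ 0 := by
    intro x hx
    rw [interior_Icc] at hx
    obtain ⟨hx0, hx1⟩ := hx
    have h3 : Real.sin (x / m) ≤ x / m := Real.sin_le (by positivity)
    have h4 : 2 / π * x ≤ Real.sin x := Real.mul_le_sin hx0.le hx1.le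
    have hsx0 : 0 ≤ 2 / π * x := by positivity
    have h5 : (1 / m) * (2 / π * x) ≤ Real.sin c * Real.sin x :=
      mul_le_mul hsc h4 hsx0
        (Real.sin_nonneg_of_nonneg_of_le_pi hcr0 (by linarith))
    have h6 : Real.sin (x / m) * (1 / m) * (1 / m) ≤ x / m * (1 / m) * (1 / m) :=
      mul_le_mul_of_nonneg_right (mul_le_mul_of_nonneg_right h3 (by positivity)) (by positivity)
    have h7 : x / m * (1 / m) * (1 / m) ≤ 1 / m * (2 / π * x) := by
      have e1 : x / m * (1/m) * (1/m) = x / (m*m*m) := by ring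
      have e2 : 1/m * (2/π*x) = 2*x/(π*m) := by ring
      rw [e1, e2, div_le_div_iff₀ (by positivity) (by positivity)]
      nlinarith [Real.pi_le_four, hx0.le, hm0.le, sq_nonneg (m - 2),
        mul_nonneg hx0.le hm0.le]
    linarith
  -- concavity
  have hconc : ConcaveOn ℝ (Icc (0:ℝ) (π/2)) g := by
    apply concaveOn_of_hasDerivWithinAt2_nonpos (convex_Icc _ _)
      (Continuous.continuousOn (by fun_prop))
      (fun x _ => (hg' x).hasDerivWithinAt)
      (fun x _ => (hg'' x).hasDerivWithinAt)
      hnonpos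
  -- endpoints vanish
  have hg0 : g 0 = 0 := by simp [hg]
  have hgπ : g (π/2) = 0 := by
    have : π / 2 / m = c := by rw [hc]; ring
    simp [hg, this]
  -- concludenonnegativity on [0, π/2]
  have hgu : 0 ≤ g u := by
    have ht0 : 0 ≤ 2 / π * u := by positivity
    have ht1 : 2 / π * u ≤ 1 := by
      rw [div_mul_eq_mul_div, div_le_one hπ]; linarith
    have hmem0 : (0:ℝ) ∈ Icc (0:ℝ) (π/2) := ⟨le_refl _, by positivity⟩
    have hmemπ : (π/2) ∈ Icc (0:ℝ) (π/2) := ⟨by positivity, le_refl _⟩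
    have := hconc.2 hmem0 hmemπ (by linarith : (0:ℝ) ≤ 1 - 2/π*u) ht0 (by ring)
    have heq : (1 - 2/π*u) • (0:ℝ) + (2/π*u) • (π/2) = u := by
      simp only [smul_eq_mul, mul_zero, zero_add]
      field_simp
    rw [heq, hg0, hgπ] at this
    simpa using this
  simpa [hg] using hgu

/-- the function `cos c - cos x + (sin c/m) cos(m x)` is nonnegative on `[0, π/2]`,
where `c = π/(2m)`, `m ≥ 2` real. -/
lemma keyF {m : ℝ} (hm : 2 ≤ m) {x : ℝ} (hx0 : 0 ≤ x) (hx1 : x ≤ π / 2) :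
    0 ≤ Real.cos (π / (2 * m)) - Real.cos x
        + Real.sin (π / (2 * m)) / m * Real.cos (m * x) := by
  have hm0 : (0:ℝ) < m := by linarith
  have hπ : (0:ℝ) < π := Real.pi_pos
  set c : ℝ := π / (2 * m) with hc
  have hcr0 : 0 ≤ c := by positivity
  have hcr1 : c ≤ π / 2 := by
    rw [hc, div_le_div_iff₀ (by linarith) (by norm_num)]
    nlinarith
  set F : ℝ → ℝ := fun x => Real.cos c - Real.cos x + Real.sin c / m * Real.cos (m * x)
    with hF
  have hF' : ∀ y : ℝ, HasDerivAt F (Real.sin y - Real.sin c * Real.sin (m * y)) y := by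
    intro y
    have h1 : HasDerivAt (fun z : ℝ => Real.cos (m * z)) (-Real.sin (m * y) * m) y := by
      have := (Real.hasDerivAt_cos (m * y)).comp y ((hasDerivAt_id y).const_mul m)
      simpa [mul_comm, Function.comp_def] using this
    have h2 := ((hasDerivAt_const y (Real.cos c)).sub (Real.hasDerivAt_cos y)).add
      (h1.const_mul (Real.sin c / m))
    refine h2.congr_deriv ?_
    field_simp
    ring
  have hcont : Continuous F := by fun_prop
  -- F is antitone on [0, c]
  have hanti : AntitoneOn F (Icc 0 c) := by
    apply antitoneOn_of_deriv_nonpos (convex_Icc _ _) hcont.continuousOn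
      (fun y _ => (hF' y).differentiableAt.differentiableWithinAt)
    intro y hy
    rw [interior_Icc] at hy
    obtain ⟨hy0, hy1⟩ := hy
    rw [(hF' y).deriv]
    have hu0 : 0 ≤ m * y := by positivity
    have hu1 : m * y ≤ π / 2 := by
      have : m * y ≤ m * c := by nlinarith
      calc m * y ≤ m * c := this
      _ = π / 2 := by rw [hc]; field_simp
    have := keyB hm hu0 hu1
    rw [show m * y / m = y by field_simp] at this
    linarith
  -- F is monotone on [c, π/2]
  have hmono : MonotoneOn F (Icc c (π/2)) := by
    apply monotoneOn_of_deriv_nonneg (convex_Icc _ _) hcont.continuousOn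
      (fun y _ => (hF' y).differentiableAt.differentiableWithinAt)
    intro y hy
    rw [interior_Icc] at hy
    obtain ⟨hy0, hy1⟩ := hy
    rw [(hF' y).deriv]
    have h1 : Real.sin c ≤ Real.sin y := by
      apply Real.strictMonoOn_sin.monotoneOn ⟨by linarith, hcr1⟩
        ⟨by linarith, hy1.le⟩ hy0.le
    have h2 : Real.sin c * Real.sin (m * y) ≤ Real.sin c * 1 :=
      mul_le_mul_of_nonneg_left (Real.sin_le_one _)
        (Real.sin_nonneg_of_nonneg_of_le_pi hcr0 (by linarith))
    linarith
  have hFc : F c = 0 := by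
    have : m * c = π / 2 := by rw [hc]; field_simp
    simp [hF, this]
  rcases le_total x c with h | h
  · have := hanti ⟨hx0, h⟩ ⟨hcr0, le_refl c⟩ h
    rw [hFc] at this
    exact this
  · have := hmono ⟨le_refl c, hcr1⟩ ⟨h, hx1⟩ h
    rw [hFc] at this
    exact this

/-- extension to all `φ` with `cos φ ≥ 0`, for natural `m ≥ 2`. -/
lemma keyG {m : ℕ} (hm : 2 ≤ m) {φ : ℝ} (hφ : 0 ≤ Real.cos φ) :
    0 ≤ Real.cos (π / (2 * m)) - Real.cos φ
        + Real.sin (π / (2 * m)) / m * Real.cos (m * φ) := by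
  have hπ : (0:ℝ) < π := Real.pi_pos
  set n : ℤ := ⌊(φ + π) / (2 * π)⌋ with hn
  set ψ : ℝ := φ - n * (2 * π) with hψ
  have hb1 : -π ≤ ψ := by
    have h1 : (n : ℝ) ≤ (φ + π) / (2 * π) := by rw [hn]; exact Int.floor_le _
    have h2 : (n : ℝ) * (2 * π) ≤ φ + π := (le_div_iff₀ (by positivity)).mp h1
    rw [hψ]; linarith
  have hb2 : ψ < π := by
    have h1 : (φ + π) / (2 * π) < (n : ℝ) + 1 := by rw [hn]; exact Int.lt_floor_add_one _
    have h2 : φ + π < ((n : ℝ) + 1) * (2 * π) := by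
      rw [div_lt_iff₀ (by positivity)] at h1
      linarith
    rw [hψ]; nlinarith
  have hcos : Real.cos ψ = Real.cos φ := by
    rw [hψ, sub_eq_add_neg, ← neg_mul, show ((-(n:ℝ)) * (2*π)) = ((-n : ℤ) : ℝ) * (2*π) by push_cast; ring]
    exact Real.cos_add_int_mul_two_pi φ (-n)
  have hcosm : Real.cos ((m:ℝ) * ψ) = Real.cos ((m:ℝ) * φ) := by
    have : (m:ℝ) * ψ = (m:ℝ) * φ + ((-(m * n) : ℤ) : ℝ) * (2 * π) := by
      rw [hψ]; push_cast; ring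
    rw [this, Real.cos_add_int_mul_two_pi]
  -- ψ ∈ [-π/2, π/2]
  have hψ2 : -(π/2) ≤ ψ ∧ ψ ≤ π/2 := by
    constructor
    · by_contra h
      push_neg at h
      have h1 : π / 2 < -ψ := by linarith
      have h2 : -ψ < π + π / 2 := by linarith
      have := Real.cos_neg_of_pi_div_two_lt_of_lt h1 h2
      rw [Real.cos_neg, hcos] at this
      linarith
    · by_contra h
      push_neg at h
      have := Real.cos_neg_of_pi_div_two_lt_of_lt h (by linarith)
      rw [hcos] at this
      linarith
  -- use |ψ|
  have hmr : (2:ℝ) ≤ (m:ℝ) := by exact_mod_cast hm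
  have hys : 0 ≤ |ψ| := abs_nonneg ψ
  have hys2 : |ψ| ≤ π / 2 := abs_le.mpr ⟨hψ2.1, hψ2.2⟩
  have := keyF hmr hys hys2
  have e1 : Real.cos |ψ| = Real.cos φ := by
    rw [← hcos]
    rcases abs_choice ψ with h | h <;> rw [h] <;> simp [Real.cos_neg]
  have e2 : Real.cos ((m:ℝ) * |ψ|) = Real.cos ((m:ℝ) * φ) := by
    rw [← hcosm]
    rcases abs_choice ψ with h | h
    · rw [h]
    · rw [h, mul_neg, Real.cos_neg]
  rw [e1, e2] at this
  exact this

/-- for even `k, p` with `p ∣ k`, `2 ≤ p ≤ k-2`,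
`0 < a ≤ 1/cos(pπ/(2k))` and `b = (p/k)tan(pπ/(2k))`, the trigonometric polynomial
`g₁(θ) = 1 - a cos(pθ) + b cos(kθ)` is nonnegative everywhere. -/
theorem stmt14 (k p : ℕ) (a : ℝ) (hke : Even k) (hpe : Even p) (hp2 : 2 ≤ p)
    (hpk : p ≤ k - 2) (hdvd : p ∣ k) (ha0 : 0 < a)
    (ha : a ≤ 1 / Real.cos ((p : ℝ) * Real.pi / (2 * k))) :
    ∀ θ : ℝ, 0 ≤ 1 - a * Real.cos (p * θ) +
      ((p : ℝ) / k) * Real.tan ((p : ℝ) * Real.pi / (2 * k)) * Real.cos (k * θ) := by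
  intro θ
  have hπ : (0:ℝ) < π := Real.pi_pos
  obtain ⟨m, hkm⟩ := hdvd
  have hm2 : 2 ≤ m := by
    rcases Nat.lt_or_ge m 2 with h | h
    · interval_cases m <;> omega
    · exact h
  have hk2 : p + 2 ≤ k := by omega
  have hp0 : 0 < p := by omega
  have hpr : (0:ℝ) < (p:ℝ) := by exact_mod_cast hp0
  have hmr : (2:ℝ) ≤ (m:ℝ) := by exact_mod_cast hm2
  have hmr0 : (0:ℝ) < (m:ℝ) := by linarith
  have hkr : (k:ℝ) = (p:ℝ) * (m:ℝ) := by exact_mod_cast hkm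
  -- rewrite the angle
  have hang : (p : ℝ) * π / (2 * k) = π / (2 * m) := by
    rw [hkr]; field_simp
  rw [hang] at ha ⊢
  set c : ℝ := π / (2 * (m:ℝ)) with hc
  have hc0 : 0 < c := by positivity
  have hc1 : c ≤ π / 4 := by
    rw [hc, div_le_div_iff₀ (by positivity) (by norm_num)]
    nlinarith
  have hcos0 : 0 < Real.cos c := Real.cos_pos_of_mem_Ioo ⟨by linarith, by linarith⟩
  have hsin0 : 0 ≤ Real.sin c := Real.sin_nonneg_of_nonneg_of_le_pi hc0.le (by linarith)
  -- sin c ≤ cos c  (since c ≤ π/4)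
  have hsc : Real.sin c ≤ Real.cos c := by
    have h1 : Real.sin c ≤ Real.sin (π/4) :=
      Real.strictMonoOn_sin.monotoneOn ⟨by linarith, by linarith⟩
        ⟨by linarith, by linarith⟩ hc1
    have h2 : Real.cos (π/4) ≤ Real.cos c :=
      Real.cos_le_cos_of_nonneg_of_le_pi hc0.le (by linarith) hc1
    rw [Real.sin_pi_div_four] at h1
    rw [Real.cos_pi_div_four] at h2
    linarith
  have htan : Real.tan c = Real.sin c / Real.cos c := Real.tan_eq_sin_div_cos c
  have htan0 : 0 ≤ Real.tan c := by
    rw [htan]; positivity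
  have htan1 : Real.tan c ≤ 1 := by
    rw [htan, div_le_one hcos0]; exact hsc
  -- p/k = 1/m
  have hpk' : (p:ℝ) / (k:ℝ) = 1 / (m:ℝ) := by
    rw [hkr]; field_simp
  rw [hpk']
  set φ : ℝ := (p:ℝ) * θ with hφ
  have hkθ : (k:ℝ) * θ = (m:ℝ) * φ := by rw [hkr, hφ]; ring
  rw [hkθ]
  rcases le_total 0 (Real.cos φ) with hcφ | hcφ
  · -- main case : cos φ ≥ 0
    have hG := keyG hm2 hcφ
    rw [← hc] at hG
    have ha' : a * Real.cos c ≤ 1 := by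
      rw [← le_div_iff₀ hcos0]; exact ha
    have h2 : a * Real.cos φ * Real.cos c ≤ Real.cos φ := by
      have := mul_le_mul_of_nonneg_right ha' hcφ
      calc a * Real.cos φ * Real.cos c = a * Real.cos c * Real.cos φ := by ring
      _ ≤ 1 * Real.cos φ := this
      _ = Real.cos φ := by ring
    have hmul : 0 ≤ (1 - a * Real.cos φ
        + 1 / (m:ℝ) * Real.tan c * Real.cos ((m:ℝ) * φ)) * Real.cos c := by
      have e : (1 - a * Real.cos φ + 1 / (m:ℝ) * Real.tan c * Real.cos ((m:ℝ) * φ))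
          * Real.cos c
          = (Real.cos c - Real.cos φ + Real.sin c / (m:ℝ) * Real.cos ((m:ℝ) * φ))
            + (Real.cos φ - a * Real.cos φ * Real.cos c) := by
        rw [htan]; field_simp; ring
      rw [e]
      linarith
    nlinarith [hmul, hcos0]
  · -- easy case : cos φ ≤ 0
    have h1 : 0 ≤ -(a * Real.cos φ) := by
      rw [neg_nonneg]
      exact mul_nonpos_of_nonneg_of_nonpos ha0.le hcφ
    have h2 : -1 ≤ Real.cos ((m:ℝ) * φ) := Real.neg_one_le_cos _
    have h3 : 1 / (m:ℝ) * Real.tan c ≤ 1 / 2 := by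
      have hm' : 1 / (m:ℝ) ≤ 1 / 2 := by
        rw [div_le_div_iff₀ hmr0 (by norm_num)]
        linarith
      have h4 := mul_le_mul hm' htan1 htan0 (by norm_num : (0:ℝ) ≤ 1/2)
      linarith
    nlinarith [mul_le_mul_of_nonneg_left (neg_le_neg h2) (by positivity : (0:ℝ) ≤ 1/(m:ℝ) * Real.tan c)]
end

section
/- Let $k \ge 4$ be an even integer and let $p, q \ge 1$ be integers with $p + 2q = k - 2$ and $p$ even. Then $\frac{(p+q)!\,q!}{(\frac{k}{2}-1)!\,(\frac{k}{2}-1)!} > \frac{1}{\cos\left(\frac{p\pi}{2k}\right)}$. -/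
open Real

lemma factAux (m : ℕ) : ∀ t, 1 ≤ t → t ≤ m →
    (m + 1) * (m.factorial * m.factorial) ≤
      (m + 1 - t) * ((m + t).factorial * (m - t).factorial) := by
  intro t
  induction t with
  | zero => omega
  | succ t ih =>
    intro _ htm
    rcases Nat.eq_zero_or_pos t with rfl | ht
    · have h3 : m = m - 1 + 1 := by omega
      have h4 : m.factorial = m * (m - 1).factorial := by
        rw (occs := .pos [1]) [h3, Nat.factorial_succ, ← h3]
      have h1 : m + 1 - (0 + 1) = m := by omega
      have h2 : m + (0 + 1) = m + 1 := by omega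
      have h5 : m - (0 + 1) = m - 1 := by omega
      rw [h1, h2, h5, Nat.factorial_succ]
      have e : (m + 1) * (m.factorial * m.factorial)
          = m * ((m + 1) * m.factorial * (m - 1).factorial) := by
        rw (occs := .pos [2]) [h4]; ring
      rw [e]
    · have h := ih ht (by omega)
      have e1 : (m + (t + 1)).factorial = (m + t + 1) * (m + t).factorial := by
        have e : m + (t + 1) = (m + t) + 1 := by omega
        rw [e, Nat.factorial_succ]
      have h3 : m - t = m - (t + 1) + 1 := by omega
      have e2 : (m - t).factorial = (m - t) * (m - (t + 1)).factorial := by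
        rw (occs := .pos [1]) [h3, Nat.factorial_succ, ← h3]
      have h5 : m + 1 - (t + 1) = m - t := by omega
      refine h.trans ?_
      rw [e1, e2, h5]
      have lhs_eq : (m + 1 - t) * ((m + t).factorial * ((m - t) * (m - (t + 1)).factorial))
          = ((m + 1 - t) * (m - t)) * ((m + t).factorial * (m - (t + 1)).factorial) := by ring
      have rhs_eq : (m - t) * ((m + t + 1) * (m + t).factorial * (m - (t + 1)).factorial)
          = ((m - t) * (m + t + 1)) * ((m + t).factorial * (m - (t + 1)).factorial) := by ring
      rw [lhs_eq, rhs_eq]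
      apply Nat.mul_le_mul_right
      have : m + 1 - t ≤ m + t + 1 := by omega
      calc (m + 1 - t) * (m - t) ≤ (m + t + 1) * (m - t) := Nat.mul_le_mul_right _ this
      _ = (m - t) * (m + t + 1) := Nat.mul_comm _ _

lemma jordan_cos {x : ℝ} (hx : 0 < x) (hx' : x < π / 2) : 1 - 2 / π * x < Real.cos x := by
  have h := Real.mul_lt_sin (x := π / 2 - x) (by linarith) (by linarith)
  rw [Real.sin_pi_div_two_sub] at h
  have hπ : (π : ℝ) ≠ 0 := Real.pi_ne_zero
  calc 1 - 2 / π * x = 2 / π * (π / 2 - x) := by field_simp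
  _ < Real.cos x := h

/-- for even `k ≥ 4` and `p, q ≥ 1` with `p` even and `p + 2q = k - 2`,
`(p+q)! q! / ((k/2-1)!)² > 1/cos(pπ/(2k))`. -/
theorem stmt15 (k p q : ℕ) (hk : 4 ≤ k) (hke : Even k) (hpe : Even p)
    (hp : 1 ≤ p) (hq : 1 ≤ q) (hpq : p + 2 * q = k - 2) :
    (1 : ℝ) / Real.cos ((p : ℝ) * Real.pi / (2 * k)) <
      ((p + q).factorial * q.factorial : ℝ) /
        ((k / 2 - 1).factorial * (k / 2 - 1).factorial : ℕ) := by
  obtain ⟨a, rfl⟩ := hke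
  obtain ⟨b, rfl⟩ := hpe
  set m : ℕ := (a + a) / 2 - 1 with hm
  set t : ℕ := b with ht
  clear_value m t
  have hm' : m = a - 1 := by omega
  have hk2 : a + a = 2 * (m + 1) := by omega
  have hp2 : t + t = 2 * t := by omega
  have ht1 : 1 ≤ t := by omega
  have htm : t + 1 ≤ m := by omega
  have hqmt : q = m - t := by omega
  have hpqmt : t + t + q = m + t := by omega
  -- the angle
  set x : ℝ := ((t + t : ℕ) : ℝ) * Real.pi / (2 * ((a + a : ℕ) : ℝ)) with hx
  have e1 : ((t + t : ℕ) : ℝ) = 2 * (t : ℝ) := by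
    have := congrArg (Nat.cast : ℕ → ℝ) hp2; push_cast at this ⊢; linarith
  have e2 : ((a + a : ℕ) : ℝ) = 2 * ((m : ℝ) + 1) := by
    have := congrArg (Nat.cast : ℕ → ℝ) hk2; push_cast at this ⊢; linarith
  have hxval : x = (t : ℝ) * Real.pi / (2 * ((m : ℝ) + 1)) := by
    rw [hx, e1, e2]
    have hm0 : (0:ℝ) < (m:ℝ) + 1 := by positivity
    field_simp
  have hπ := Real.pi_pos
  have hm0 : (0:ℝ) < (m:ℝ) + 1 := by positivity
  have hx0 : 0 < x := by
    rw [hxval]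
    have : (0:ℝ) < (t:ℝ) := by exact_mod_cast ht1
    positivity
  have hx2 : x < Real.pi / 2 := by
    rw [hxval, div_lt_div_iff₀ (by positivity) (by norm_num)]
    have htR : (t : ℝ) < (m : ℝ) + 1 := by
      have : (t:ℝ) ≤ (m:ℝ) := by exact_mod_cast (by omega : t ≤ m)
      linarith
    nlinarith
  -- Jordan bound
  have hjord := jordan_cos hx0 hx2
  have hlin : 1 - 2 / Real.pi * x = ((m : ℝ) + 1 - (t : ℝ)) / ((m : ℝ) + 1) := by
    rw [hxval]
    field_simp
  have htR : (t : ℝ) ≤ (m : ℝ) := by exact_mod_cast (by omega : t ≤ m)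
  have hd0 : (0:ℝ) < ((m : ℝ) + 1 - (t : ℝ)) / ((m : ℝ) + 1) := by
    apply div_pos (by linarith) hm0
  have hcos : ((m : ℝ) + 1 - (t : ℝ)) / ((m : ℝ) + 1) < Real.cos x := by
    rw [← hlin]; exact hjord
  -- factorial bound, cast to ℝ
  have hfact := factAux m t ht1 (by omega)
  have hfactR : ((m : ℝ) + 1) * ((m.factorial : ℝ) * (m.factorial : ℝ)) ≤
      ((m : ℝ) + 1 - (t : ℝ)) * (((m + t).factorial : ℝ) * ((m - t).factorial : ℝ)) := by
    have hc : ((m + 1 - t : ℕ) : ℝ) = (m : ℝ) + 1 - (t : ℝ) := by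
      rw [Nat.cast_sub (by omega)]; push_cast; ring
    calc ((m : ℝ) + 1) * ((m.factorial : ℝ) * (m.factorial : ℝ))
        = (((m + 1) * (m.factorial * m.factorial) : ℕ) : ℝ) := by push_cast; ring
    _ ≤ (((m + 1 - t) * ((m + t).factorial * (m - t).factorial) : ℕ) : ℝ) := by
        exact_mod_cast hfact
    _ = ((m : ℝ) + 1 - (t : ℝ)) * (((m + t).factorial : ℝ) * ((m - t).factorial : ℝ)) := by
        push_cast [hc]; ring
  -- rewrite goal
  have hgoal1 : t + t + q = m + t := hpqmt
  have hgoal2 : (a + a) / 2 - 1 = m := hm.symm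
  rw [hgoal1, hqmt]
  have hA : (0:ℝ) < ((m.factorial * m.factorial : ℕ) : ℝ) := by
    positivity
  have hB : (0:ℝ) < ((m + t).factorial : ℝ) * ((m - t).factorial : ℝ) := by positivity
  have hc0 : 0 < Real.cos x := lt_trans hd0 hcos
  have step1 : (1:ℝ) / Real.cos x < ((m : ℝ) + 1) / ((m : ℝ) + 1 - (t : ℝ)) := by
    rw [div_lt_div_iff₀ hc0 (by linarith)]
    have := hcos
    rw [div_lt_iff₀ hm0] at this
    nlinarith
  have step2 : ((m : ℝ) + 1) / ((m : ℝ) + 1 - (t : ℝ)) ≤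
      (((m + t).factorial : ℝ) * ((m - t).factorial : ℝ)) / ((m.factorial * m.factorial : ℕ) : ℝ) := by
    have hAe : ((m.factorial * m.factorial : ℕ) : ℝ) = (m.factorial : ℝ) * (m.factorial : ℝ) := by
      push_cast; ring
    rw [hAe, div_le_div_iff₀ (by linarith) (by positivity)]
    exact hfactR.trans_eq (by ring)
  calc (1:ℝ) / Real.cos x < ((m : ℝ) + 1) / ((m : ℝ) + 1 - (t : ℝ)) := step1
  _ ≤ _ := step2
end
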